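/- The modified wavenumber of the fourth-order compact mixed-derivative approximation, λ_{4OC-M}(κ₁h, κ₂k) = −(sin(κ₁h) sin(κ₂k)/(hk))[3/(2+cos(κ₁h)) + 3/(2+cos(κ₂k)) − 1], agrees with the exact characteristic λ_Exact = −κ₁κ₂ up to fourth order: λ_{4OC-M} = −κ₁κ₂ + O(h⁴ + k⁴ + h²k²) as h, k → 0 for fixed κ₁, κ₂. -/

import Mathlib

open Filter Topology Asymptotics

section AuxLemmas
open Finset Complex

lemma sin_quintic {x : ℝ} (hx : |x| ≤ 1) :
    |Real.sin x - (x - x ^ 3 / 6 + x ^ 5 / 120)| ≤ |x| ^ 5 / 600 := by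
  have key : |Real.sin x - (x - x ^ 3 / 6 + x ^ 5 / 120)|
      = ‖((Complex.exp (-x * I) - ∑ m ∈ range 6, (-x * I) ^ m / m.factorial) -
          (Complex.exp (x * I) - ∑ m ∈ range 6, (x * I) ^ m / m.factorial)) * I / 2‖ := by
    rw [show |Real.sin x - (x - x ^ 3 / 6 + x ^ 5 / 120)|
        = ‖(Real.sin x : ℂ) - ((x : ℂ) - (x:ℂ) ^ 3 / 6 + (x:ℂ) ^ 5 / 120)‖ by
      rw [← Real.norm_eq_abs, ← Complex.norm_real]; push_cast; ring_nf]
    congr 1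
    rw [Complex.ofReal_sin, Complex.sin]
    simp only [Finset.sum_range_succ, Finset.range_zero, Finset.sum_empty]
    field_simp
    ring_nf
    simp [Nat.factorial, Complex.I_sq, pow_succ]
    ring
  rw [key]
  have b1 : ‖Complex.exp (x * I) - ∑ m ∈ range 6, (x * I) ^ m / m.factorial‖
      ≤ ‖x * I‖ ^ 6 * (Nat.succ 6 * ((Nat.factorial 6) * (6 : ℕ) : ℝ)⁻¹) :=
    Complex.exp_bound (by simpa) (by norm_num)
  have b2 : ‖Complex.exp (-x * I) - ∑ m ∈ range 6, (-x * I) ^ m / m.factorial‖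
      ≤ ‖-x * I‖ ^ 6 * (Nat.succ 6 * ((Nat.factorial 6) * (6 : ℕ) : ℝ)⁻¹) :=
    Complex.exp_bound (by simpa) (by norm_num)
  calc ‖((Complex.exp (-x * I) - ∑ m ∈ range 6, (-x * I) ^ m / m.factorial) -
          (Complex.exp (x * I) - ∑ m ∈ range 6, (x * I) ^ m / m.factorial)) * I / 2‖
      ≤ (‖Complex.exp (-x * I) - ∑ m ∈ range 6, (-x * I) ^ m / m.factorial‖ +
         ‖Complex.exp (x * I) - ∑ m ∈ range 6, (x * I) ^ m / m.factorial‖) / 2 := by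
        rw [norm_div, norm_mul]
        simp only [Complex.norm_I, mul_one, Complex.norm_two]
        have := norm_sub_le
          (Complex.exp (-x * I) - ∑ m ∈ range 6, (-x * I) ^ m / m.factorial)
          (Complex.exp (x * I) - ∑ m ∈ range 6, (x * I) ^ m / m.factorial)
        linarith
    _ ≤ |x| ^ 5 / 600 := by
        have hx6 : ‖x * I‖ = |x| := by simp
        have hx6' : ‖-x * I‖ = |x| := by simp
        rw [hx6] at b1; rw [hx6'] at b2
        have h6 : |x| ^ 6 ≤ |x| ^ 5 := pow_le_pow_of_le_one (abs_nonneg x) hx (by norm_num)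
        norm_num [Nat.factorial] at b1 b2
        simp only [neg_mul] at b2 ⊢
        linarith [pow_nonneg (abs_nonneg x) 5]

lemma sin_cubic {x : ℝ} (hx : |x| ≤ 1) : |Real.sin x - x| ≤ |x| ^ 3 := by
  have h := Real.sin_bound hx
  have h1 : |Real.sin x - x| ≤ |Real.sin x - (x - x ^ 3 / 6)| + |x ^ 3 / 6| := by
    calc |Real.sin x - x| = |(Real.sin x - (x - x^3/6)) + (-(x^3/6))| := by ring_nf
      _ ≤ |Real.sin x - (x - x^3/6)| + |(-(x^3/6))| := abs_add_le _ _
      _ = |Real.sin x - (x - x^3/6)| + |x^3/6| := by rw [abs_neg]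
  have h2 : |x ^ 3 / 6| = |x| ^ 3 / 6 := by
    rw [abs_div, _root_.abs_pow]; norm_num
  have h4 : |x| ^ 5 ≤ |x| ^ 3 := pow_le_pow_of_le_one (abs_nonneg x) hx (by norm_num)
  have h5 : (0:ℝ) ≤ |x| ^ 3 := pow_nonneg (abs_nonneg x) 3
  calc |Real.sin x - x| ≤ |x| ^ 5 / 100 + |x| ^ 3 / 6 := by rw [h2] at h1; linarith
    _ ≤ |x| ^ 3 := by linarith

lemma pade_quintic {x : ℝ} (hx : |x| ≤ 1) :
    |3 * Real.sin x - x * (2 + Real.cos x)| ≤ |x| ^ 5 := by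
  have hs := sin_quintic hx
  have hc := Real.cos_bound hx
  set A := Real.sin x - (x - x ^ 3 / 6 + x ^ 5 / 120) with hA
  set B := Real.cos x - (1 - x ^ 2 / 2) with hB
  have key : 3 * Real.sin x - x * (2 + Real.cos x) = 3 * A - x * B + x ^ 5 / 40 := by
    rw [hA, hB]; ring
  have h1 : |3 * A - x * B + x ^ 5 / 40| ≤ 3 * |A| + |x| * |B| + |x| ^ 5 / 40 := by
    calc |3 * A - x * B + x ^ 5 / 40| ≤ |3 * A - x * B| + |x ^ 5 / 40| := abs_add_le _ _
      _ ≤ |3 * A| + |x * B| + |x ^ 5 / 40| := by linarith [abs_sub (3 * A) (x * B)]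
      _ = 3 * |A| + |x| * |B| + |x| ^ 5 / 40 := by
          rw [abs_mul, abs_mul, abs_div, _root_.abs_pow]; norm_num
  have h2 : |x| * |B| ≤ |x| ^ 5 * (5 / 96) := by
    calc |x| * |B| ≤ |x| * (|x| ^ 4 * (5/96)) := by
          exact mul_le_mul_of_nonneg_left hc (abs_nonneg x)
      _ = |x| ^ 5 * (5/96) := by ring
  rw [key]
  have h5 : (0:ℝ) ≤ |x| ^ 5 := pow_nonneg (abs_nonneg x) 5
  linarith

end AuxLemmas

set_option maxHeartbeats 1000000 in
theorem compact_mixed_symbol_fourth_order (κ₁ κ₂ : ℝ) :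
    (fun p : ℝ × ℝ =>
        -(Real.sin (κ₁ * p.1) * Real.sin (κ₂ * p.2) / (p.1 * p.2)) *
            (3 / (2 + Real.cos (κ₁ * p.1)) + 3 / (2 + Real.cos (κ₂ * p.2)) - 1) -
          (-(κ₁ * κ₂)))
      =O[𝓝[Set.Ioi (0:ℝ) ×ˢ Set.Ioi (0:ℝ)] (0, 0)]
      (fun p : ℝ × ℝ => p.1 ^ 4 + p.2 ^ 4 + p.1 ^ 2 * p.2 ^ 2) := by
  set A := |κ₁| with hA
  set B := |κ₂| with hB
  have hA0 : 0 ≤ A := abs_nonneg _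
  have hB0 : 0 ≤ B := abs_nonneg _
  set C : ℝ := A^3*B^3 + A^5*B + A*B^5 with hC
  set δ : ℝ := min (1/(A+1)) (1/(B+1)) with hδdef
  have hδ : 0 < δ := lt_min (by positivity) (by positivity)
  apply IsBigO.of_bound C
  have hx : ∀ᶠ x : ℝ in 𝓝 0, |x| < δ := by
    filter_upwards [Metric.ball_mem_nhds (0:ℝ) hδ] with x hx
    simpa [Real.dist_eq] using hx
  have h1 : ∀ᶠ p : ℝ×ℝ in 𝓝 ((0:ℝ),(0:ℝ)), |p.1| < δ ∧ |p.2| < δ := by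
    rw [nhds_prod_eq]
    exact hx.prod_mk hx
  filter_upwards [nhdsWithin_le_nhds h1, self_mem_nhdsWithin] with p hp hmem
  obtain ⟨x, y⟩ := p
  obtain ⟨hδ1, hδ2⟩ := hp
  have hx0 : (0:ℝ) < x := hmem.1
  have hy0 : (0:ℝ) < y := hmem.2
  simp only at hδ1 hδ2 ⊢
  -- abbreviations
  have ha : |κ₁ * x| ≤ 1 := by
    rw [abs_mul]
    have h1 : |x| ≤ 1/(A+1) := le_trans hδ1.le (min_le_left _ _)
    calc |κ₁| * |x| ≤ A * (1/(A+1)) := mul_le_mul_of_nonneg_left h1 (abs_nonneg _)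
      _ ≤ 1 := by rw [mul_one_div, div_le_one (by positivity)]; linarith
  have hb : |κ₂ * y| ≤ 1 := by
    rw [abs_mul]
    have h1 : |y| ≤ 1/(B+1) := le_trans hδ2.le (min_le_right _ _)
    calc |κ₂| * |y| ≤ B * (1/(B+1)) := mul_le_mul_of_nonneg_left h1 (abs_nonneg _)
      _ ≤ 1 := by rw [mul_one_div, div_le_one (by positivity)]; linarith
  have hca : (1:ℝ) ≤ 2 + Real.cos (κ₁ * x) := by nlinarith [Real.neg_one_le_cos (κ₁ * x)]
  have hcb : (1:ℝ) ≤ 2 + Real.cos (κ₂ * y) := by nlinarith [Real.neg_one_le_cos (κ₂ * y)]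
  have hca0 : (0:ℝ) < 2 + Real.cos (κ₁ * x) := lt_of_lt_of_le one_pos hca
  have hcb0 : (0:ℝ) < 2 + Real.cos (κ₂ * y) := lt_of_lt_of_le one_pos hcb
  set N : ℝ := (κ₁*x - Real.sin (κ₁*x)) * (κ₂*y - Real.sin (κ₂*y))
     - Real.sin (κ₂*y) * (3*Real.sin (κ₁*x) - (κ₁*x)*(2+Real.cos (κ₁*x))) / (2+Real.cos (κ₁*x))
     - Real.sin (κ₁*x) * (3*Real.sin (κ₂*y) - (κ₂*y)*(2+Real.cos (κ₂*y))) / (2+Real.cos (κ₂*y))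
     with hN
  have hident : -(Real.sin (κ₁*x) * Real.sin (κ₂*y) / (x*y)) *
      (3/(2+Real.cos (κ₁*x)) + 3/(2+Real.cos (κ₂*y)) - 1) - (-(κ₁*κ₂)) = N / (x*y) := by
    rw [hN]
    field_simp
    ring
  rw [hident]
  -- bound |N|
  have hT1 : |(κ₁*x - Real.sin (κ₁*x)) * (κ₂*y - Real.sin (κ₂*y))| ≤ |κ₁*x|^3 * |κ₂*y|^3 := by
    rw [abs_mul]
    have e1 : |κ₁*x - Real.sin (κ₁*x)| ≤ |κ₁*x|^3 := by
      rw [← abs_neg]; simpa [neg_sub] using sin_cubic ha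
    have e2 : |κ₂*y - Real.sin (κ₂*y)| ≤ |κ₂*y|^3 := by
      rw [← abs_neg]; simpa [neg_sub] using sin_cubic hb
    exact mul_le_mul e1 e2 (abs_nonneg _) (by positivity)
  have hT2 : |Real.sin (κ₂*y) * (3*Real.sin (κ₁*x) - (κ₁*x)*(2+Real.cos (κ₁*x))) / (2+Real.cos (κ₁*x))|
      ≤ |κ₂*y| * |κ₁*x|^5 := by
    rw [abs_div, abs_mul, abs_of_pos hca0]
    calc |Real.sin (κ₂*y)| * |3*Real.sin (κ₁*x) - (κ₁*x)*(2+Real.cos (κ₁*x))| / (2+Real.cos (κ₁*x))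
        ≤ |Real.sin (κ₂*y)| * |3*Real.sin (κ₁*x) - (κ₁*x)*(2+Real.cos (κ₁*x))| :=
          div_le_self (by positivity) hca
      _ ≤ |κ₂*y| * |κ₁*x|^5 :=
          mul_le_mul (Real.abs_sin_le_abs) (pade_quintic ha) (abs_nonneg _) (abs_nonneg _)
  have hT3 : |Real.sin (κ₁*x) * (3*Real.sin (κ₂*y) - (κ₂*y)*(2+Real.cos (κ₂*y))) / (2+Real.cos (κ₂*y))|
      ≤ |κ₁*x| * |κ₂*y|^5 := by
    rw [abs_div, abs_mul, abs_of_pos hcb0]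
    calc |Real.sin (κ₁*x)| * |3*Real.sin (κ₂*y) - (κ₂*y)*(2+Real.cos (κ₂*y))| / (2+Real.cos (κ₂*y))
        ≤ |Real.sin (κ₁*x)| * |3*Real.sin (κ₂*y) - (κ₂*y)*(2+Real.cos (κ₂*y))| :=
          div_le_self (by positivity) hcb
      _ ≤ |κ₁*x| * |κ₂*y|^5 :=
          mul_le_mul (Real.abs_sin_le_abs) (pade_quintic hb) (abs_nonneg _) (abs_nonneg _)
  have hNb : |N| ≤ |κ₁*x|^3 * |κ₂*y|^3 + |κ₂*y| * |κ₁*x|^5 + |κ₁*x| * |κ₂*y|^5 := by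
    rw [hN]
    have t1 := abs_sub (((κ₁*x - Real.sin (κ₁*x)) * (κ₂*y - Real.sin (κ₂*y)))
      - Real.sin (κ₂*y) * (3*Real.sin (κ₁*x) - (κ₁*x)*(2+Real.cos (κ₁*x))) / (2+Real.cos (κ₁*x)))
      (Real.sin (κ₁*x) * (3*Real.sin (κ₂*y) - (κ₂*y)*(2+Real.cos (κ₂*y))) / (2+Real.cos (κ₂*y)))
    have t2 := abs_sub ((κ₁*x - Real.sin (κ₁*x)) * (κ₂*y - Real.sin (κ₂*y)))
      (Real.sin (κ₂*y) * (3*Real.sin (κ₁*x) - (κ₁*x)*(2+Real.cos (κ₁*x))) / (2+Real.cos (κ₁*x)))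
    linarith
  -- convert abs to A,B,x,y
  have haA : |κ₁*x| = A * x := by rw [abs_mul, abs_of_pos hx0]
  have hbB : |κ₂*y| = B * y := by rw [abs_mul, abs_of_pos hy0]
  rw [haA, hbB] at hNb
  -- final norm computation
  rw [Real.norm_eq_abs, Real.norm_eq_abs, abs_div, abs_of_pos (mul_pos hx0 hy0),
    _root_.abs_of_nonneg (by positivity : (0:ℝ) ≤ x^4 + y^4 + x^2*y^2)]
  rw [div_le_iff₀ (mul_pos hx0 hy0)]
  have expand : (A*x)^3 * (B*y)^3 + (B*y) * (A*x)^5 + (A*x) * (B*y)^5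
      ≤ C * (x^4 + y^4 + x^2*y^2) * (x*y) := by
    rw [hC]
    have m1 : A^3*B^3 * (x^3*y^3) ≤ A^3*B^3 * ((x^4 + y^4 + x^2*y^2)*(x*y)) := by
      have : x^3*y^3 ≤ (x^4 + y^4 + x^2*y^2)*(x*y) := by
        nlinarith [mul_pos (pow_pos hx0 5) hy0, mul_pos hx0 (pow_pos hy0 5)]
      exact mul_le_mul_of_nonneg_left this (by positivity)
    have m2 : A^5*B * (x^5*y) ≤ A^5*B * ((x^4 + y^4 + x^2*y^2)*(x*y)) := by
      have : x^5*y ≤ (x^4 + y^4 + x^2*y^2)*(x*y) := by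
        nlinarith [mul_pos hx0 (pow_pos hy0 5), mul_pos (pow_pos hx0 3) (pow_pos hy0 3)]
      exact mul_le_mul_of_nonneg_left this (by positivity)
    have m3 : A*B^5 * (x*y^5) ≤ A*B^5 * ((x^4 + y^4 + x^2*y^2)*(x*y)) := by
      have : x*y^5 ≤ (x^4 + y^4 + x^2*y^2)*(x*y) := by
        nlinarith [mul_pos (pow_pos hx0 5) hy0, mul_pos (pow_pos hx0 3) (pow_pos hy0 3)]
      exact mul_le_mul_of_nonneg_left this (by positivity)
    nlinarith [m1, m2, m3]
  calc |N| ≤ (A*x)^3 * (B*y)^3 + (B*y) * (A*x)^5 + (A*x) * (B*y)^5 := hNb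
    _ ≤ C * (x^4 + y^4 + x^2*y^2) * (x*y) := expand
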